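/- arXiv:1904.12853 — 5 statements merged into one kernel-verified Lean document; each statement's English description precedes it below -/
import Mathlib

section
/- Let w be a weight structure on a triangulated category C. Then C_{w≥0} = (C_{w≤-1})^⊥, i.e., an object Y belongs to C_{w≥0} if and only if Hom(X, Y) = 0 for all X ∈ C_{w≤-1}. -/
open CategoryTheory Limits Pretriangulated

structure WeightStructure (C : Type*) [Category C] [Preadditive C] [HasZeroObject C]
    [HasShift C ℤ] [∀ n : ℤ, (CategoryTheory.shiftFunctor C n).Additive] [Pretriangulated C] where
  le : Set C
  ge : Set C
  le_retract : ∀ ⦃X Y : C⦄, Y ∈ le → ∀ (i : X ⟶ Y) (r : Y ⟶ X), i ≫ r = 𝟙 X → X ∈ le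
  ge_retract : ∀ ⦃X Y : C⦄, Y ∈ ge → ∀ (i : X ⟶ Y) (r : Y ⟶ X), i ≫ r = 𝟙 X → X ∈ ge
  le_shift : ∀ ⦃X : C⦄, X ∈ le → X⟦(-1 : ℤ)⟧ ∈ le
  ge_shift : ∀ ⦃X : C⦄, X ∈ ge → X⟦(1 : ℤ)⟧ ∈ ge
  orth : ∀ ⦃X Y : C⦄, X ∈ le → Y ∈ ge → ∀ f : X ⟶ Y⟦(1 : ℤ)⟧, f = 0
  decomp : ∀ M : C, ∃ (L R : C) (f : L ⟶ M) (g : M ⟶ R) (δ : R ⟶ L⟦(1 : ℤ)⟧),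
    (Triangle.mk f g δ ∈ distTriang C) ∧ L ∈ le ∧ R⟦(-1 : ℤ)⟧ ∈ ge

namespace WeightStructure

variable {C : Type*} [Category C] [Preadditive C] [HasZeroObject C]
  [HasShift C ℤ] [∀ n : ℤ, (CategoryTheory.shiftFunctor C n).Additive] [Pretriangulated C]
  (w : WeightStructure C)

/-- The class `C_{w ≤ n} = C_{w≤0}[n]`. -/
def Le (n : ℤ) : Set C := {X | X⟦(-n)⟧ ∈ w.le}

/-- The class `C_{w ≥ n} = C_{w≥0}[n]`. -/
def Ge (n : ℤ) : Set C := {X | X⟦(-n)⟧ ∈ w.ge}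

/-- `f, g, δ` form a `k`-weight decomposition triangle of `M`. -/
def IsWeightDecomp (k : ℤ) {A M B : C} (f : A ⟶ M) (g : M ⟶ B) (δ : B ⟶ A⟦(1 : ℤ)⟧) : Prop :=
  (Triangle.mk f g δ ∈ distTriang C) ∧ A ∈ w.Le k ∧ B ∈ w.Ge (k + 1)

/-- `g : M ⟶ N` kills weights `m,…,n`. -/
def KillsWeights (m n : ℤ) {M N : C} (g : M ⟶ N) : Prop :=
  ∃ (A B A' B' : C) (a : A ⟶ M) (b : M ⟶ B) (δ : B ⟶ A⟦(1 : ℤ)⟧)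
    (a' : A' ⟶ N) (b' : N ⟶ B') (δ' : B' ⟶ A'⟦(1 : ℤ)⟧),
    w.IsWeightDecomp n a b δ ∧ w.IsWeightDecomp (m - 1) a' b' δ' ∧ a ≫ g ≫ b' = 0

/-- `M` is without weights `m,…,n`. -/
def WithoutWeights (m n : ℤ) (M : C) : Prop := w.KillsWeights m n (𝟙 M)

end WeightStructure

/-- `C_{w≥0} = (C_{w≤-1})^⊥`. -/
theorem ge_eq_perp_le_neg_one {C : Type*} [Category C] [Preadditive C] [HasZeroObject C]
    [HasShift C ℤ] [∀ n : ℤ, (CategoryTheory.shiftFunctor C n).Additive] [Pretriangulated C]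
    (w : WeightStructure C) :
    w.Ge 0 = {Y : C | ∀ X ∈ w.Le (-1), ∀ f : X ⟶ Y, f = 0} := by
  ext Y
  simp only [WeightStructure.Ge, WeightStructure.Le, Set.mem_setOf_eq, neg_zero, neg_neg]
  constructor
  · intro hY X hX f
    -- hX : X⟦1⟧ ∈ w.le, hY : Y⟦0⟧ ∈ w.ge
    have h0 : (shiftFunctor C (1:ℤ)).map f ≫
        (shiftFunctor C (1:ℤ)).map ((shiftFunctorZero C ℤ).inv.app Y) = 0 :=
      w.orth hX hY _
    rw [← zero_comp] at h0
    have h1 : (shiftFunctor C (1:ℤ)).map f = 0 := (cancel_mono _).1 h0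
    apply (shiftFunctor C (1:ℤ)).map_injective
    simpa using h1
  · intro hY
    obtain ⟨L, R, f, g, δ, hT, hL, hR⟩ := w.decomp (Y⟦(1:ℤ)⟧)
    -- L⟦-1⟧ ∈ Le (-1)
    have hLmem : (L⟦(-1:ℤ)⟧)⟦(1:ℤ)⟧ ∈ w.le := by
      refine w.le_retract hL ((shiftFunctorCompIsoId C (-1:ℤ) (1:ℤ) (by norm_num)).hom.app L)
        ((shiftFunctorCompIsoId C (-1:ℤ) (1:ℤ) (by norm_num)).inv.app L) (by simp)
    -- the corresponding map L⟦-1⟧ ⟶ Y is zero, hence f = 0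
    have hf' : (shiftFunctor C (-1:ℤ)).map f ≫
        (shiftFunctorCompIsoId C (1:ℤ) (-1:ℤ) (by norm_num)).hom.app Y = 0 :=
      hY _ hLmem _
    rw [← zero_comp] at hf'
    have hfm : (shiftFunctor C (-1:ℤ)).map f = 0 := (cancel_mono _).1 hf'
    have hf : f = 0 := by
      apply (shiftFunctor C (-1:ℤ)).map_injective
      simpa using hfm
    -- get a retraction of g
    obtain ⟨r, hr⟩ := Pretriangulated.Triangle.yoneda_exact₂ _ hT (𝟙 (Y⟦(1:ℤ)⟧))
      (by simp [hf]; exact zero_comp)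
    -- Y⟦1⟧⟦-1⟧ ∈ w.ge as a retract of R⟦-1⟧
    have hY1 : (Y⟦(1:ℤ)⟧)⟦(-1:ℤ)⟧ ∈ w.ge := by
      refine w.ge_retract hR ((shiftFunctor C (-1:ℤ)).map g)
        ((shiftFunctor C (-1:ℤ)).map r) ?_
      change 𝟙 _ = g ≫ r at hr
      erw [← Functor.map_comp, ← hr]
      simp
    -- transport along the iso Y⟦0⟧ ≅ Y ≅ Y⟦1⟧⟦-1⟧
    refine w.ge_retract hY1
      ((shiftFunctorZero C ℤ).hom.app Y ≫
        (shiftFunctorCompIsoId C (1:ℤ) (-1:ℤ) (by norm_num)).inv.app Y)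
      ((shiftFunctorCompIsoId C (1:ℤ) (-1:ℤ) (by norm_num)).hom.app Y ≫
        (shiftFunctorZero C ℤ).inv.app Y) (by simp)
end

section
/- Let w be a weight structure on a triangulated category C, let m ≤ n be integers, and let g : M → N. Then the following conditions are equivalent: (1) there exist an n-weight decomposition of M and an (m−1)-weight decomposition of N such that the composite w_{≤n}M → M → N → w_{≥m}N vanishes; (2) there exist choices of w_{≤n}M and w_{≤m-1}N and a morphism h : w_{≤n}M → w_{≤m-1}N such that the square with the canonical morphisms w_{≤n}M → M, w_{≤m-1}N → N and with g commutes; (3) there exist choices of w_{≥n+1}M and w_{≥m}N and a morphism j : w_{≥n+1}M → w_{≥m}N such that the square with the canonical morphisms M → w_{≥n+1}M, N → w_{≥m}N and with g commutes. -/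
open CategoryTheory Limits Pretriangulated

/-- equivalent characterizations of morphisms killing weights `m,…,n`. -/
theorem killsWeights_iff {C : Type*} [Category C] [Preadditive C] [HasZeroObject C]
    [HasShift C ℤ] [∀ n : ℤ, (CategoryTheory.shiftFunctor C n).Additive] [Pretriangulated C]
    (w : WeightStructure C) (m n : ℤ) (hmn : m ≤ n) {M N : C} (g : M ⟶ N) :
    (w.KillsWeights m n g ↔
      ∃ (A B A' B' : C) (a : A ⟶ M) (b : M ⟶ B) (δ : B ⟶ A⟦(1 : ℤ)⟧)
        (a' : A' ⟶ N) (b' : N ⟶ B') (δ' : B' ⟶ A'⟦(1 : ℤ)⟧),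
        w.IsWeightDecomp n a b δ ∧ w.IsWeightDecomp (m - 1) a' b' δ' ∧
          ∃ h : A ⟶ A', h ≫ a' = a ≫ g) ∧
    (w.KillsWeights m n g ↔
      ∃ (A B A' B' : C) (a : A ⟶ M) (b : M ⟶ B) (δ : B ⟶ A⟦(1 : ℤ)⟧)
        (a' : A' ⟶ N) (b' : N ⟶ B') (δ' : B' ⟶ A'⟦(1 : ℤ)⟧),
        w.IsWeightDecomp n a b δ ∧ w.IsWeightDecomp (m - 1) a' b' δ' ∧
          ∃ j : B ⟶ B', b ≫ j = g ≫ b') := by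

  constructor
  · constructor
    · rintro ⟨A,B,A',B',a,b,δ,a',b',δ',h1,h2,h3⟩
      refine ⟨A,B,A',B',a,b,δ,a',b',δ',h1,h2,?_⟩
      obtain ⟨h, hh⟩ := Triangle.coyoneda_exact₂ _ h2.1 (a ≫ g)
        (by exact (Category.assoc a g b').trans h3)
      exact ⟨h, hh.symm⟩
    · rintro ⟨A,B,A',B',a,b,δ,a',b',δ',h1,h2,h,hh⟩
      refine ⟨A,B,A',B',a,b,δ,a',b',δ',h1,h2,?_⟩
      have hz : a' ≫ b' = 0 := comp_distTriang_mor_zero₁₂ _ h2.1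
      rw [← Category.assoc, ← hh, Category.assoc, hz, comp_zero]
  · constructor
    · rintro ⟨A,B,A',B',a,b,δ,a',b',δ',h1,h2,h3⟩
      refine ⟨A,B,A',B',a,b,δ,a',b',δ',h1,h2,?_⟩
      obtain ⟨j, hj⟩ := Triangle.yoneda_exact₂ _ h1.1 (g ≫ b')
        (by exact h3)
      exact ⟨j, hj.symm⟩
    · rintro ⟨A,B,A',B',a,b,δ,a',b',δ',h1,h2,j,hj⟩
      refine ⟨A,B,A',B',a,b,δ,a',b',δ',h1,h2,?_⟩
      have hz : a ≫ b = 0 := comp_distTriang_mor_zero₁₂ _ h1.1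
      rw [← hj, ← Category.assoc, hz, zero_comp]
end

section
/- Let w be a weight structure on a triangulated category C and m ≤ n integers. The class of morphisms killing weights m,…,n forms a two-sided ideal: if g : M → N kills weights m,…,n, then for any h : N → O and h' : O' → M, both h∘g and g∘h' kill weights m,…,n. -/
open CategoryTheory Limits Pretriangulated

namespace WeightStructure

variable {C : Type*} [Category C] [Preadditive C] [HasZeroObject C]
  [HasShift C ℤ] [∀ n : ℤ, (CategoryTheory.shiftFunctor C n).Additive] [Pretriangulated C]
  (w : WeightStructure C)

lemma le_iso {X Y : C} (e : X ≅ Y) (hY : Y ∈ w.le) : X ∈ w.le :=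
  w.le_retract hY e.hom e.inv e.hom_inv_id

lemma ge_iso {X Y : C} (e : X ≅ Y) (hY : Y ∈ w.ge) : X ∈ w.ge :=
  w.ge_retract hY e.hom e.inv e.hom_inv_id

lemma hom_zero (k : ℤ) {X Y : C} (hX : X ∈ w.Le k) (hY : Y ∈ w.Ge (k + 1))
    (f : X ⟶ Y) : f = 0 := by
  apply (shiftFunctor C (-k)).map_injective
  rw [Functor.map_zero]
  have e : X⟦(-k)⟧ ⟶ (Y⟦(-(k+1))⟧)⟦(1 : ℤ)⟧ :=
    (shiftFunctor C (-k)).map f ≫ ((shiftFunctorAdd' C (-(k+1)) 1 (-k) (by ring)).hom.app Y)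
  have h0 : (shiftFunctor C (-k)).map f ≫
      ((shiftFunctorAdd' C (-(k+1)) 1 (-k) (by ring)).hom.app Y) = 0 := w.orth hX hY _
  rw [← cancel_mono ((shiftFunctorAdd' C (-(k+1)) 1 (-k) (by ring)).hom.app Y), zero_comp]
  exact h0

lemma exists_weightDecomp (k : ℤ) (M : C) :
    ∃ (A B : C) (a : A ⟶ M) (b : M ⟶ B) (δ : B ⟶ A⟦(1 : ℤ)⟧), w.IsWeightDecomp k a b δ := by
  obtain ⟨L, R, f, g, δ, hT, hL, hR⟩ := w.decomp (M⟦(-k)⟧)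
  have hT' := Pretriangulated.Triangle.shift_distinguished _ hT k
  set T' : Triangle C := (CategoryTheory.shiftFunctor (Triangle C) k).obj (Triangle.mk f g δ)
    with hT'def
  let e : (M⟦(-k)⟧)⟦k⟧ ≅ M := (shiftFunctorCompIsoId C (-k) k (by ring)).app M
  refine ⟨L⟦k⟧, R⟦k⟧, T'.mor₁ ≫ e.hom, e.inv ≫ T'.mor₂, T'.mor₃, ?_, ?_, ?_⟩
  · refine isomorphic_distinguished _ hT' _ ?_
    exact Triangle.isoMk _ _ (Iso.refl _) e.symm (Iso.refl _)
      (by exact (Category.assoc T'.mor₁ e.hom e.inv).trans ((congrArg (T'.mor₁ ≫ ·) e.hom_inv_id).trans ((Category.comp_id T'.mor₁).trans (Category.id_comp T'.mor₁).symm)))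
      (by show (e.inv ≫ T'.mor₂) ≫ 𝟙 _ = e.inv ≫ T'.mor₂; exact Category.comp_id _)
      (by exact ((congrArg (T'.mor₃ ≫ ·) ((shiftFunctor C (1 : ℤ)).map_id T'.obj₁)).trans (Category.comp_id T'.mor₃)).trans (Category.id_comp T'.mor₃).symm)
  · exact w.le_iso ((shiftFunctorCompIsoId C k (-k) (by ring)).app L) hL
  · refine w.ge_iso ?_ hR
    exact ((shiftFunctorAdd' C k (-(k+1)) (-1) (by ring)).app R).symm

end WeightStructure

/-- morphisms killing weights `m,…,n` form a two-sided ideal. -/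
theorem killsWeights_ideal {C : Type*} [Category C] [Preadditive C] [HasZeroObject C]
    [HasShift C ℤ] [∀ n : ℤ, (CategoryTheory.shiftFunctor C n).Additive] [Pretriangulated C]
    (w : WeightStructure C) (m n : ℤ) (hmn : m ≤ n) {M N : C} (g : M ⟶ N)
    (hg : w.KillsWeights m n g) :
    (∀ (O : C) (h : N ⟶ O), w.KillsWeights m n (g ≫ h)) ∧
      (∀ (O' : C) (h' : O' ⟶ M), w.KillsWeights m n (h' ≫ g)) := by
  obtain ⟨A, B, A', B', a, b, δ, a', b', δ', hM, hN, hz⟩ := hg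
  constructor
  · intro O h
    obtain ⟨A'', B'', a'', b'', δ'', hO⟩ := w.exists_weightDecomp (m - 1) O
    refine ⟨A, B, A'', B'', a, b, δ, a'', b'', δ'', hM, hO, ?_⟩
    obtain ⟨φ, hφ⟩ := Pretriangulated.Triangle.coyoneda_exact₂ _ hN.1 (a ≫ g)
      (by exact (Category.assoc a g b').trans hz)
    have h0 : a' ≫ h ≫ b'' = 0 := w.hom_zero (m - 1) hN.2.1 hO.2.2 _
    have : a ≫ (g ≫ h) ≫ b'' = (a ≫ g) ≫ (h ≫ b'') := by simp
    rw [this]; erw [hφ]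
    show (φ ≫ a') ≫ h ≫ b'' = 0
    exact (Category.assoc φ a' (h ≫ b'')).trans ((congrArg (φ ≫ ·) h0).trans comp_zero)
  · intro O' h'
    obtain ⟨A'', B'', a'', b'', δ'', hO'⟩ := w.exists_weightDecomp n O'
    refine ⟨A'', B'', A', B', a'', b'', δ'', a', b', δ', hO', hN, ?_⟩
    obtain ⟨ψ, hψ⟩ := Pretriangulated.Triangle.yoneda_exact₂ _ hM.1 (g ≫ b')
      (by exact hz)
    have h0 : a'' ≫ h' ≫ b = 0 := w.hom_zero n hO'.2.1 hM.2.2 _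
    have : a'' ≫ (h' ≫ g) ≫ b' = (a'' ≫ h') ≫ (g ≫ b') := by simp
    rw [this]; erw [hψ]
    show (a'' ≫ h') ≫ b ≫ ψ = 0
    refine ((Category.assoc (a'' ≫ h') b ψ).symm.trans (congrArg (· ≫ ψ) ((Category.assoc a'' h' b).trans h0))).trans ?_
    exact zero_comp
end

section
/- Let w be a weight structure on a triangulated category C, and let m' < m ≤ n be integers. If g : M → N kills weights m,…,n and h : N → O kills weights m',…,m−1, then the composite h∘g kills weights m',…,n. -/
open CategoryTheory Limits Pretriangulated

theorem hom_zero_of_le_ge {C : Type*} [Category C] [Preadditive C] [HasZeroObject C]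
    [HasShift C ℤ] [∀ n : ℤ, (CategoryTheory.shiftFunctor C n).Additive] [Pretriangulated C]
    (w : WeightStructure C) (k : ℤ) {X Y : C} (hX : X ∈ w.Le k) (hY : Y ∈ w.Ge (k + 1))
    (f : X ⟶ Y) : f = 0 := by
  have hX' : X⟦(-k)⟧ ∈ w.le := hX
  have hY' : Y⟦(-(k+1))⟧ ∈ w.ge := hY
  have key : (shiftFunctor C (-k)).map f ≫ (shiftFunctorAdd' C (-(k+1)) 1 (-k) (by omega)).hom.app Y = 0 :=
    w.orth hX' hY' _
  have h0 : (shiftFunctor C (1 : ℤ)).map ((shiftFunctor C (-(k+1))).map f) = 0 := by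
    have := key =≫ (shiftFunctorAdd' C (-(k+1)) 1 (-k) (by omega)).inv.app Y
    simpa using this
  exact (shiftFunctor C (-(k+1))).map_injective
    ((shiftFunctor C (1 : ℤ)).map_injective (by simpa using h0))

/-- composing morphisms killing adjacent weight ranges kills the union range. -/
theorem killsWeights_comp {C : Type*} [Category C] [Preadditive C] [HasZeroObject C]
    [HasShift C ℤ] [∀ n : ℤ, (CategoryTheory.shiftFunctor C n).Additive] [Pretriangulated C]
    (w : WeightStructure C) (m' m n : ℤ) (h1 : m' < m) (h2 : m ≤ n)
    {M N O : C} (g : M ⟶ N) (h : N ⟶ O)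
    (hg : w.KillsWeights m n g) (hh : w.KillsWeights m' (m - 1) h) :
    w.KillsWeights m' n (g ≫ h) := by
  obtain ⟨A, B, A', B', a, b, δ, a', b', δ', hdM, hdN, hz⟩ := hg
  obtain ⟨A₂, B₂, A₂', B₂', a₂, b₂, δ₂, a₂', b₂', δ₂', hdN₂, hdO, hz₂⟩ := hh
  refine ⟨A, B, A₂', B₂', a, b, δ, a₂', b₂', δ₂', hdM, by simpa using hdO, ?_⟩
  -- a ≫ g factors through a'
  obtain ⟨φ, hφ⟩ : ∃ φ : A ⟶ A', a ≫ g = φ ≫ a' := Pretriangulated.Triangle.coyoneda_exact₂ _ hdN.1 (a ≫ g)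
    (by exact (Category.assoc a g b').trans hz)
  change a ≫ g = φ ≫ a' at hφ
  -- h ≫ b₂' factors through b₂
  obtain ⟨ψ, hψ⟩ : ∃ ψ : B₂ ⟶ B₂', h ≫ b₂' = b₂ ≫ ψ := Pretriangulated.Triangle.yoneda_exact₂ _ hdN₂.1 (h ≫ b₂')
    (by exact hz₂)
  change h ≫ b₂' = b₂ ≫ ψ at hψ
  have hAB : a' ≫ b₂ = 0 := by
    have : (m - 1) + 1 = m := by omega
    exact hom_zero_of_le_ge w (m - 1) hdN.2.1 (this ▸ hdN₂.2.2) _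
  calc a ≫ (g ≫ h) ≫ b₂' = (a ≫ g) ≫ (h ≫ b₂') := by simp
    _ = (φ ≫ a') ≫ (b₂ ≫ ψ) := by rw [← hφ, ← hψ]
    _ = φ ≫ (a' ≫ b₂) ≫ ψ := by simp
    _ = 0 := by rw [hAB]; simp
end

section
/- Let w be a weight structure on a triangulated category C, m ≤ n integers, and O an object of C. Suppose there exists a distinguished triangle X → O → Y → X[1] with X ∈ C_{w≤m-1} and Y ∈ C_{w≥n+1} (a decomposition of O avoiding weights m,…,n). Then: (a) this triangle is simultaneously an l-weight decomposition of O for every integer l with m−1 ≤ l ≤ n; (b) O is without weights m,…,n; and (c) the triangle is unique up to a canonical isomorphism. -/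
open CategoryTheory Limits Pretriangulated

namespace WeightStructure

variable {C : Type*} [Category C] [Preadditive C] [HasZeroObject C]
  [HasShift C ℤ] [∀ n : ℤ, (CategoryTheory.shiftFunctor C n).Additive] [Pretriangulated C]
  (w : WeightStructure C)

lemma mem_le_of_iso {A B : C} (e : A ≅ B) (h : B ∈ w.le) : A ∈ w.le :=
  w.le_retract h e.hom e.inv e.hom_inv_id

lemma mem_ge_of_iso {A B : C} (e : A ≅ B) (h : B ∈ w.ge) : A ∈ w.ge :=
  w.ge_retract h e.hom e.inv e.hom_inv_id

lemma le_mono {A : C} {k j : ℤ} (h : A ∈ w.Le k) (hkj : k ≤ j) : A ∈ w.Le j := by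
  refine Int.le_induction (motive := fun j _ => A ∈ w.Le j) h (fun j _ ih => ?_) j hkj
  exact w.mem_le_of_iso ((shiftFunctorAdd' C (-j) (-1) (-(j+1)) (by ring)).app A)
    (w.le_shift ih)

lemma ge_anti {A : C} {k j : ℤ} (h : A ∈ w.Ge k) (hjk : j ≤ k) : A ∈ w.Ge j := by
  refine Int.le_induction_down (motive := fun j _ => A ∈ w.Ge j) h (fun j _ ih => ?_) j hjk
  exact w.mem_ge_of_iso ((shiftFunctorAdd' C (-j) (1) (-(j-1)) (by ring)).app A)
    (w.ge_shift ih)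

lemma shift_one_mem_le {A : C} {k : ℤ} (h : A ∈ w.Le k) : A⟦(1 : ℤ)⟧ ∈ w.Le (k + 1) :=
  w.mem_le_of_iso ((shiftFunctorAdd' C (1 : ℤ) (-(k+1)) (-k) (by ring)).app A).symm h

lemma shift_neg_one_mem_ge {A : C} {k : ℤ} (h : A ∈ w.Ge k) : A⟦(-1 : ℤ)⟧ ∈ w.Ge (k - 1) :=
  w.mem_ge_of_iso ((shiftFunctorAdd' C (-1 : ℤ) (-(k-1)) (-k) (by ring)).app A).symm h

lemma hom_zero_s12 {A B : C} {k l : ℤ} (hA : A ∈ w.Le k) (hB : B ∈ w.Ge l) (hkl : k < l)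
    (f : A ⟶ B) : f = 0 := by
  have hB' : B ∈ w.Ge (k + 1) := w.ge_anti hB (by omega)
  have h0 : (shiftFunctor C (-k)).map f ≫
      ((shiftFunctorAdd' C (-(k+1)) 1 (-k) (by ring)).app B).hom = 0 :=
    w.orth hA hB' _
  apply (shiftFunctor C (-k)).map_injective
  rw [Functor.map_zero, ← Category.comp_id ((shiftFunctor C (-k)).map f),
    ← ((shiftFunctorAdd' C (-(k+1)) 1 (-k) (by ring)).app B).hom_inv_id, ← Category.assoc,
    h0, zero_comp]

/-- Existence and uniqueness of lifts against a weight decomposition triangle. -/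
lemma exists_unique_lift {X' O' Y' : C} (a' : X' ⟶ O') (b' : O' ⟶ Y') (δ' : Y' ⟶ X'⟦(1 : ℤ)⟧)
    (hd : Triangle.mk a' b' δ' ∈ distTriang C) {Z : C} {k l : ℤ}
    (hZ : Z ∈ w.Le k) (hY' : Y' ∈ w.Ge l) (hkl : k + 1 < l) (f : Z ⟶ O') :
    ∃! φ : Z ⟶ X', φ ≫ a' = f := by
  obtain ⟨φ, hφ⟩ := Triangle.coyoneda_exact₂ _ hd f (w.hom_zero_s12 hZ hY' (by omega) _)
  refine ⟨φ, hφ.symm, ?_⟩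
  have uniq : ∀ φ₁ φ₂ : Z ⟶ X', φ₁ ≫ a' = f → φ₂ ≫ a' = f → φ₁ = φ₂ := by
    intro φ₁ φ₂ h₁ h₂
    have hsub : (φ₁ - φ₂) ≫ a' = 0 := by rw [Preadditive.sub_comp, h₁, h₂, sub_self]
    obtain ⟨g, hg⟩ := Triangle.coyoneda_exact₂ _ (inv_rot_of_distTriang _ hd) (φ₁ - φ₂) hsub
    have hg0 : g = 0 := w.hom_zero_s12 hZ (w.shift_neg_one_mem_ge hY') (by omega) g
    rw [hg0, zero_comp] at hg
    exact sub_eq_zero.1 hg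
  exact fun ψ hψ => uniq ψ φ hψ hφ.symm

/-- Existence and uniqueness of descents along a weight decomposition triangle. -/
lemma exists_unique_desc {X' O' Y' : C} (a' : X' ⟶ O') (b' : O' ⟶ Y') (δ' : Y' ⟶ X'⟦(1 : ℤ)⟧)
    (hd : Triangle.mk a' b' δ' ∈ distTriang C) {W : C} {k l : ℤ}
    (hX' : X' ∈ w.Le k) (hW : W ∈ w.Ge l) (hkl : k + 1 < l) (f : O' ⟶ W) :
    ∃! ψ : Y' ⟶ W, b' ≫ ψ = f := by
  obtain ⟨ψ, hψ⟩ := Triangle.yoneda_exact₂ _ hd f (w.hom_zero_s12 hX' hW (by omega) _)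
  refine ⟨ψ, hψ.symm, ?_⟩
  have uniq : ∀ ψ₁ ψ₂ : Y' ⟶ W, b' ≫ ψ₁ = f → b' ≫ ψ₂ = f → ψ₁ = ψ₂ := by
    intro ψ₁ ψ₂ h₁ h₂
    have hsub : b' ≫ (ψ₁ - ψ₂) = 0 := by rw [Preadditive.comp_sub, h₁, h₂, sub_self]
    obtain ⟨g, hg⟩ := Triangle.yoneda_exact₃ _ hd (ψ₁ - ψ₂) hsub
    have hg0 : g = 0 := w.hom_zero_s12 (w.shift_one_mem_le hX') hW (by omega) g
    rw [hg0, comp_zero] at hg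
    exact sub_eq_zero.1 hg
  exact fun φ hφ => uniq φ ψ hφ hψ.symm

end WeightStructure

/-- a decomposition avoiding weights `m,…,n` is an `l`-weight decomposition
for all `m-1 ≤ l ≤ n`, shows that `O` is without weights `m,…,n`, and is unique up to a
canonical isomorphism. -/
theorem decomposition_avoiding_weights {C : Type*} [Category C] [Preadditive C] [HasZeroObject C]
    [HasShift C ℤ] [∀ n : ℤ, (CategoryTheory.shiftFunctor C n).Additive] [Pretriangulated C]
    (w : WeightStructure C) (m n : ℤ) (hmn : m ≤ n) {O X Y : C}
    (a : X ⟶ O) (b : O ⟶ Y) (δ : Y ⟶ X⟦(1 : ℤ)⟧)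
    (hdist : Triangle.mk a b δ ∈ distTriang C)
    (hX : X ∈ w.Le (m - 1)) (hY : Y ∈ w.Ge (n + 1)) :
    (∀ l : ℤ, m - 1 ≤ l → l ≤ n → w.IsWeightDecomp l a b δ) ∧
    w.WithoutWeights m n O ∧
    (∀ (X' Y' : C) (a' : X' ⟶ O) (b' : O ⟶ Y') (δ' : Y' ⟶ X'⟦(1 : ℤ)⟧),
      (Triangle.mk a' b' δ' ∈ distTriang C) → X' ∈ w.Le (m - 1) → Y' ∈ w.Ge (n + 1) →
      ∃ (φ : X ≅ X') (ψ : Y ≅ Y'),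
        (φ.hom ≫ a' = a ∧ b ≫ ψ.hom = b') ∧
        ∀ (φ' : X ⟶ X') (ψ' : Y ⟶ Y'), φ' ≫ a' = a → b ≫ ψ' = b' →
          φ' = φ.hom ∧ ψ' = ψ.hom) := by
  refine ⟨?_, ?_, ?_⟩
  · intro l h1 h2
    exact ⟨hdist, w.le_mono hX (by omega), w.ge_anti hY (by omega)⟩
  · refine ⟨X, Y, X, Y, a, b, δ, a, b, δ,
      ⟨hdist, w.le_mono hX (by omega), hY⟩,
      ⟨hdist, hX, w.ge_anti hY (by omega)⟩, ?_⟩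
    rw [Category.id_comp]
    exact comp_distTriang_mor_zero₁₂ _ hdist
  · intro X' Y' a' b' δ' hdist' hX' hY'
    obtain ⟨φ₁, hφ₁, hφ₁u⟩ := w.exists_unique_lift a' b' δ' hdist' hX hY' (by omega) a
    obtain ⟨φ₂, hφ₂, _⟩ := w.exists_unique_lift a b δ hdist hX' hY (by omega) a'
    obtain ⟨_, _, hselfu⟩ := w.exists_unique_lift a b δ hdist hX hY (by omega) a
    obtain ⟨ψ₁, hψ₁, hψ₁u⟩ := w.exists_unique_desc a b δ hdist hX hY' (by omega) b'
    obtain ⟨ψ₂, hψ₂, _⟩ := w.exists_unique_desc a' b' δ' hdist' hX' hY (by omega) b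
    obtain ⟨_, _, hselfu'⟩ := w.exists_unique_desc a b δ hdist hX hY (by omega) b
    obtain ⟨_, _, hselfu''⟩ := w.exists_unique_lift a' b' δ' hdist' hX' hY' (by omega) a'
    obtain ⟨_, _, hselfu'''⟩ := w.exists_unique_desc a' b' δ' hdist' hX' hY' (by omega) b'
    have hφ12 : φ₁ ≫ φ₂ = 𝟙 X :=
      (hselfu (φ₁ ≫ φ₂) (show (φ₁ ≫ φ₂) ≫ a = a by rw [Category.assoc, hφ₂, hφ₁])).trans
        (hselfu (𝟙 X) (show 𝟙 X ≫ a = a by rw [Category.id_comp])).symm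
    have hφ21 : φ₂ ≫ φ₁ = 𝟙 X' :=
      (hselfu'' (φ₂ ≫ φ₁) (show (φ₂ ≫ φ₁) ≫ a' = a' by rw [Category.assoc, hφ₁, hφ₂])).trans
        (hselfu'' (𝟙 X') (show 𝟙 X' ≫ a' = a' by rw [Category.id_comp])).symm
    have hψ12 : ψ₁ ≫ ψ₂ = 𝟙 Y :=
      (hselfu' (ψ₁ ≫ ψ₂) (show b ≫ ψ₁ ≫ ψ₂ = b by rw [← Category.assoc, hψ₁, hψ₂])).trans
        (hselfu' (𝟙 Y) (show b ≫ 𝟙 Y = b by rw [Category.comp_id])).symm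
    have hψ21 : ψ₂ ≫ ψ₁ = 𝟙 Y' :=
      (hselfu''' (ψ₂ ≫ ψ₁) (show b' ≫ ψ₂ ≫ ψ₁ = b' by rw [← Category.assoc, hψ₂, hψ₁])).trans
        (hselfu''' (𝟙 Y') (show b' ≫ 𝟙 Y' = b' by rw [Category.comp_id])).symm
    exact ⟨⟨φ₁, φ₂, hφ12, hφ21⟩, ⟨ψ₁, ψ₂, hψ12, hψ21⟩, ⟨hφ₁, hψ₁⟩,
      fun φ' ψ' h1 h2 => ⟨hφ₁u φ' h1, hψ₁u ψ' h2⟩⟩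
end
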